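/- Let * be a continuous t-norm and T an algebra of truth values for *. Then Taut([0,1],min) ⊆ Taut(T,*) (i.e. the induced logic extends Gödel logic) if and only if every element of T is idempotent, i.e. a*a = a for all a ∈ T; in that case * restricted to T is the minimum, a*b = min(a,b) for all a,b ∈ T, and →* restricted to T is the Gödel residuum: a →* b = 1 if a ≤ b and a →* b = b if a > b. -/

import Mathlib

open Set

noncomputable section

/-- The real unit interval `[0,1]` as a subset of `ℝ`. -/
def I01 : Set ℝ := Set.Icc 0 1

/-- A continuous t-norm on `[0,1]`. -/
structure ContTNorm where
  mul : ℝ → ℝ → ℝ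
  maps_to : ∀ x ∈ I01, ∀ y ∈ I01, mul x y ∈ I01
  continuousOn : ContinuousOn (fun p : ℝ × ℝ => mul p.1 p.2) (I01 ×ˢ I01)
  assoc : ∀ x ∈ I01, ∀ y ∈ I01, ∀ z ∈ I01, mul (mul x y) z = mul x (mul y z)
  comm : ∀ x ∈ I01, ∀ y ∈ I01, mul x y = mul y x
  mono : ∀ a ∈ I01, ∀ b ∈ I01, ∀ c ∈ I01, b ≤ c → mul a b ≤ mul a c
  one_mul' : ∀ x ∈ I01, mul 1 x = x

/-- The residuum of a t-norm: `x →* y := sup { c ∈ [0,1] | x * c ≤ y }`. -/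
def resid (t : ContTNorm) (x y : ℝ) : ℝ :=
  sSup {c | c ∈ I01 ∧ t.mul x c ≤ y}

/-- An algebra of truth values for the t-norm `t`: a subset of `[0,1]` containing
`0` and `1` and closed under `t.mul` and its residuum. -/
structure TruthAlg (t : ContTNorm) where
  carrier : Set ℝ
  subset : carrier ⊆ I01
  zero_mem : (0:ℝ) ∈ carrier
  one_mem : (1:ℝ) ∈ carrier
  mul_mem : ∀ x ∈ carrier, ∀ y ∈ carrier, t.mul x y ∈ carrier
  resid_mem : ∀ x ∈ carrier, ∀ y ∈ carrier, resid t x y ∈ carrier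

/-- Propositional formulas over countably many variables with `&`, `→`, `⊥`. -/
inductive Formula : Type
  | var : ℕ → Formula
  | bot : Formula
  | conj : Formula → Formula → Formula
  | impl : Formula → Formula → Formula

/-- `α ↔ β := (α → β) & (β → α)`. -/
def Formula.iff (a b : Formula) : Formula := .conj (.impl a b) (.impl b a)

/-- The valuation determined by an assignment `v` of reals to the variables. -/
def eval (t : ContTNorm) (v : ℕ → ℝ) : Formula → ℝ
  | .var i => v i
  | .bot => 0
  | .conj a b => t.mul (eval t v a) (eval t v b)
  | .impl a b => resid t (eval t v a) (eval t v b)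

/-- A valuation into `(T, t)` is (identified with) an assignment of values of `T`
to the propositional variables. -/
def IsValuation (t : ContTNorm) (T : TruthAlg t) (v : ℕ → ℝ) : Prop :=
  ∀ i, v i ∈ T.carrier

/-- The logic induced by `(T, t)`: all formulas true to degree 1 under every valuation. -/
def Taut (t : ContTNorm) (T : TruthAlg t) : Set Formula :=
  {α | ∀ v : ℕ → ℝ, IsValuation t T v → eval t v α = 1}

/-- Principle P1. -/
def P1 (L : Set Formula) : Prop :=
  ∀ (t : ContTNorm) (T : TruthAlg t), Taut t T = L →
    ∀ α β : Formula,
      (Formula.iff α β ∈ L ↔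
        ∀ v : ℕ → ℝ, IsValuation t T v → (eval t v α = 1 ↔ eval t v β = 1))

/-- Principle P2. -/
def P2 (L : Set Formula) : Prop :=
  ∀ (t : ContTNorm) (T : TruthAlg t), Taut t T = L →
    ∀ v w : ℕ → ℝ, IsValuation t T v → IsValuation t T w → v ≠ w →
      ∃ α : Formula, 0 < eval t v α ∧ eval t w α = 0

/-- The Gödel t-norm: minimum. -/
def minT : ContTNorm where
  mul := fun x y => min x y
  maps_to := by
    rintro x ⟨hx0, hx1⟩ y ⟨hy0, hy1⟩
    exact ⟨le_min hx0 hy0, min_le_of_left_le hx1⟩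
  continuousOn := (continuous_fst.min continuous_snd).continuousOn
  assoc := fun x _ y _ z _ => min_assoc x y z
  comm := fun x _ y _ => min_comm x y
  mono := fun a _ b _ c _ h => min_le_min le_rfl h
  one_mul' := by rintro x ⟨hx0, hx1⟩; exact min_eq_right hx1

/-- The Łukasiewicz t-norm: `x ⊙ y = max 0 (x + y - 1)`. -/
def lukT : ContTNorm where
  mul := fun x y => max 0 (x + y - 1)
  maps_to := by
    rintro x ⟨hx0, hx1⟩ y ⟨hy0, hy1⟩
    exact ⟨le_max_left _ _, max_le zero_le_one (by linarith)⟩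
  continuousOn :=
    (continuous_const.max ((continuous_fst.add continuous_snd).sub continuous_const)).continuousOn
  assoc := by
    rintro x ⟨hx0, hx1⟩ y ⟨hy0, hy1⟩ z ⟨hz0, hz1⟩
    simp only [max_def]
    split_ifs <;> linarith
  comm := by intro x _ y _; rw [add_comm]
  mono := by
    rintro a _ b _ c _ h
    exact max_le_max le_rfl (by linarith)
  one_mul' := by
    rintro x ⟨hx0, hx1⟩
    rw [show (1:ℝ) + x - 1 = x by ring, max_eq_right hx0]

/-- The product t-norm: ordinary multiplication. -/
def prodT : ContTNorm where
  mul := fun x y => x * y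
  maps_to := by
    rintro x ⟨hx0, hx1⟩ y ⟨hy0, hy1⟩
    exact ⟨mul_nonneg hx0 hy0, by nlinarith⟩
  continuousOn := (continuous_fst.mul continuous_snd).continuousOn
  assoc := fun x _ y _ z _ => mul_assoc x y z
  comm := fun x _ y _ => mul_comm x y
  mono := by rintro a ⟨ha0, _⟩ b _ c _ h; exact mul_le_mul_of_nonneg_left h ha0
  one_mul' := fun x _ => one_mul x

lemma ContTNorm.mul_zero' (t : ContTNorm) {x : ℝ} (hx : x ∈ I01) : t.mul x 0 = 0 := by
  have h01 : (0:ℝ) ∈ I01 := ⟨le_rfl, zero_le_one⟩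
  have h11 : (1:ℝ) ∈ I01 := ⟨zero_le_one, le_rfl⟩
  have h1 : t.mul x 0 = t.mul 0 x := t.comm x hx 0 h01
  have h2 : t.mul 0 x ≤ t.mul 0 1 := t.mono 0 h01 x hx 1 h11 hx.2
  have h3 : t.mul 0 1 = t.mul 1 0 := t.comm 0 h01 1 h11
  have h4 : t.mul 1 0 = 0 := t.one_mul' 0 h01
  have h5 : t.mul x 0 ∈ I01 := t.maps_to x hx 0 h01
  rw [h3, h4] at h2
  rw [h1] at h5 ⊢
  exact le_antisymm h2 h5.1

lemma resid_mem_I01 (t : ContTNorm) {x y : ℝ} (hx : x ∈ I01) (hy : y ∈ I01) :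
    resid t x y ∈ I01 := by
  have h01 : (0:ℝ) ∈ I01 := ⟨le_rfl, zero_le_one⟩
  have h0 : (0:ℝ) ∈ {c | c ∈ I01 ∧ t.mul x c ≤ y} :=
    ⟨h01, by rw [t.mul_zero' hx]; exact hy.1⟩
  have hbdd : BddAbove {c | c ∈ I01 ∧ t.mul x c ≤ y} := ⟨1, fun c hc => hc.1.2⟩
  constructor
  · exact le_csSup hbdd h0
  · exact csSup_le ⟨0, h0⟩ fun c hc => hc.1.2

/-- The full algebra of truth values `[0,1]` for a t-norm `t`. -/
def fullAlg (t : ContTNorm) : TruthAlg t where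
  carrier := I01
  subset := le_rfl
  zero_mem := ⟨le_rfl, zero_le_one⟩
  one_mem := ⟨zero_le_one, le_rfl⟩
  mul_mem := t.maps_to
  resid_mem := fun _ hx _ hy => resid_mem_I01 t hx hy

lemma resid_eq_one_of_le (t : ContTNorm) {x y : ℝ} (hx : x ∈ I01) (hy : y ∈ I01)
    (hxy : x ≤ y) : resid t x y = 1 := by
  have h11 : (1:ℝ) ∈ I01 := ⟨zero_le_one, le_rfl⟩
  have hmul : t.mul x 1 = x := by rw [t.comm x hx 1 h11]; exact t.one_mul' x hx
  have h1 : (1:ℝ) ∈ {c | c ∈ I01 ∧ t.mul x c ≤ y} := ⟨h11, by rw [hmul]; exact hxy⟩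
  have hbdd : BddAbove {c | c ∈ I01 ∧ t.mul x c ≤ y} := ⟨1, fun c hc => hc.1.2⟩
  exact le_antisymm (csSup_le ⟨1, h1⟩ fun c hc => hc.1.2) (le_csSup hbdd h1)

lemma resid_one_zero (t : ContTNorm) : resid t 1 0 = 0 := by
  have : {c | c ∈ I01 ∧ t.mul 1 c ≤ 0} = {0} := by
    ext c
    constructor
    · rintro ⟨hc, hle⟩
      have := t.one_mul' c hc
      have := hc.1
      simp only [Set.mem_singleton_iff]
      linarith [this, (t.one_mul' c hc) ▸ hle]
    · rintro rfl
      exact ⟨⟨le_rfl, zero_le_one⟩, by rw [t.mul_zero' ⟨zero_le_one, le_rfl⟩]⟩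
  rw [resid, this, csSup_singleton]

/-- The two-element algebra of truth values `{0,1}`. -/
def boolAlg (t : ContTNorm) : TruthAlg t where
  carrier := {0, 1}
  subset := by
    rintro x (rfl | rfl)
    · exact ⟨le_rfl, zero_le_one⟩
    · exact ⟨zero_le_one, le_rfl⟩
  zero_mem := Or.inl rfl
  one_mem := Or.inr rfl
  mul_mem := by
    have h01 : (0:ℝ) ∈ I01 := ⟨le_rfl, zero_le_one⟩
    have h11 : (1:ℝ) ∈ I01 := ⟨zero_le_one, le_rfl⟩
    rintro x (rfl | rfl) y (rfl | rfl)
    · exact Or.inl (t.mul_zero' h01)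
    · exact Or.inl (by rw [t.comm 0 h01 1 h11]; exact t.mul_zero' h11)
    · exact Or.inl (t.mul_zero' h11)
    · exact Or.inr (t.one_mul' 1 h11)
  resid_mem := by
    have h01 : (0:ℝ) ∈ I01 := ⟨le_rfl, zero_le_one⟩
    have h11 : (1:ℝ) ∈ I01 := ⟨zero_le_one, le_rfl⟩
    rintro x (rfl | rfl) y (rfl | rfl)
    · exact Or.inr (resid_eq_one_of_le t h01 h01 le_rfl)
    · exact Or.inr (resid_eq_one_of_le t h01 h11 zero_le_one)
    · exact Or.inl (resid_one_zero t)
    · exact Or.inr (resid_eq_one_of_le t h11 h11 le_rfl)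

/-- Classical logic: the logic induced by the two-element algebra `{0,1}`
(this is independent of the chosen continuous t-norm). -/
def ClassicalLogic : Set Formula := Taut minT (boolAlg minT)


lemma ContTNorm.mul_le_left (t : ContTNorm) {x y : ℝ} (hx : x ∈ I01) (hy : y ∈ I01) :
    t.mul x y ≤ x := by
  have h11 : (1:ℝ) ∈ I01 := ⟨zero_le_one, le_rfl⟩
  have h1 : t.mul x y ≤ t.mul x 1 := t.mono x hx y hy 1 h11 hy.2
  rwa [t.comm x hx 1 h11, t.one_mul' x hx] at h1

lemma ContTNorm.mul_le_right (t : ContTNorm) {x y : ℝ} (hx : x ∈ I01) (hy : y ∈ I01) :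
    t.mul x y ≤ y := by
  rw [t.comm x hx y hy]; exact t.mul_le_left hy hx

/-- The residuum is attained: the defining set is compact, so `sSup` is a member. -/
lemma resid_spec (t : ContTNorm) {x y : ℝ} (hx : x ∈ I01) (hy : y ∈ I01) :
    resid t x y ∈ I01 ∧ t.mul x (resid t x y) ≤ y := by
  have h01 : (0:ℝ) ∈ I01 := ⟨le_rfl, zero_le_one⟩
  set S := {c | c ∈ I01 ∧ t.mul x c ≤ y} with hS
  have hS0 : (0:ℝ) ∈ S := ⟨h01, by rw [t.mul_zero' hx]; exact hy.1⟩
  have hcont : ContinuousOn (fun c => t.mul x c) I01 := by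
    have : ContinuousOn ((fun p : ℝ × ℝ => t.mul p.1 p.2) ∘ (fun c => (x, c))) I01 :=
      t.continuousOn.comp (Continuous.continuousOn (by fun_prop))
        (fun c hc => ⟨hx, hc⟩)
    exact this
  have hclosed : IsClosed S := by
    have : S = I01 ∩ (fun c => t.mul x c) ⁻¹' Set.Iic y := by
      ext c; simp [hS, Set.mem_setOf_eq, Set.mem_Iic]
    rw [this]
    exact hcont.preimage_isClosed_of_isClosed isClosed_Icc isClosed_Iic
  have hcpt : IsCompact S :=
    IsCompact.of_isClosed_subset isCompact_Icc hclosed (fun c hc => hc.1)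
  have := hcpt.sSup_mem ⟨0, hS0⟩
  exact ⟨this.1, this.2⟩

lemma tnorm_mul_eq_one (t : ContTNorm) {x y : ℝ} (hx : x ∈ I01) (hy : y ∈ I01)
    (h : t.mul x y = 1) : x = 1 ∧ y = 1 := by
  constructor
  · exact le_antisymm hx.2 (h ▸ t.mul_le_left hx hy)
  · exact le_antisymm hy.2 (h ▸ t.mul_le_right hx hy)

lemma le_of_resid_eq_one (t : ContTNorm) {x y : ℝ} (hx : x ∈ I01) (hy : y ∈ I01)
    (h : resid t x y = 1) : x ≤ y := by
  have h11 : (1:ℝ) ∈ I01 := ⟨zero_le_one, le_rfl⟩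
  have := (resid_spec t hx hy).2
  rw [h, t.comm x hx 1 h11, t.one_mul' x hx] at this
  exact this

lemma mul_eq_min_of_idem (t : ContTNorm) (T : TruthAlg t)
    (hid : ∀ a ∈ T.carrier, t.mul a a = a)
    {a b : ℝ} (ha : a ∈ T.carrier) (hb : b ∈ T.carrier) : t.mul a b = min a b := by
  have haI := T.subset ha
  have hbI := T.subset hb
  rcases le_total a b with h | h
  · rw [min_eq_left h]
    refine le_antisymm (t.mul_le_left haI hbI) ?_
    have : t.mul a a ≤ t.mul a b := t.mono a haI a haI b hbI h
    rwa [hid a ha] at this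
  · rw [min_eq_right h]
    refine le_antisymm (t.mul_le_right haI hbI) ?_
    have : t.mul b b ≤ t.mul b a := t.mono b hbI b hbI a haI h
    rw [hid b hb, t.comm b hbI a haI] at this
    exact this

lemma resid_eq_of_lt_idem (t : ContTNorm) (T : TruthAlg t)
    (hid : ∀ a ∈ T.carrier, t.mul a a = a)
    {a b : ℝ} (ha : a ∈ T.carrier) (hb : b ∈ T.carrier) (hba : b < a) :
    resid t a b = b := by
  have haI := T.subset ha
  have hbI := T.subset hb
  have hrT : resid t a b ∈ T.carrier := T.resid_mem a ha b hb
  have hmulb : t.mul a b = b := by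
    rw [mul_eq_min_of_idem t T hid ha hb, min_eq_right hba.le]
  have hble : b ≤ resid t a b := by
    have hbdd : BddAbove {c | c ∈ I01 ∧ t.mul a c ≤ b} := ⟨1, fun c hc => hc.1.2⟩
    exact le_csSup hbdd ⟨hbI, le_of_eq hmulb⟩
  have hspec := (resid_spec t haI hbI).2
  rw [mul_eq_min_of_idem t T hid ha hrT] at hspec
  have hrle : resid t a b ≤ b := by
    rcases le_total (resid t a b) a with h | h
    · rwa [min_eq_right h] at hspec
    · rw [min_eq_left h] at hspec; linarith
  exact le_antisymm hrle hble

lemma idem_min : ∀ a ∈ (fullAlg minT).carrier, minT.mul a a = a := by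
  intro a _; exact min_self a

lemma eval_eq_of_idem (t : ContTNorm) (T : TruthAlg t)
    (hid : ∀ a ∈ T.carrier, t.mul a a = a)
    {v : ℕ → ℝ} (hv : IsValuation t T v) (φ : Formula) :
    eval t v φ ∈ T.carrier ∧ eval t v φ = eval minT v φ := by
  induction φ with
  | var i => exact ⟨hv i, rfl⟩
  | bot => exact ⟨T.zero_mem, rfl⟩
  | conj a b iha ihb =>
    refine ⟨T.mul_mem _ iha.1 _ ihb.1, ?_⟩
    show t.mul (eval t v a) (eval t v b) = minT.mul (eval minT v a) (eval minT v b)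
    rw [mul_eq_min_of_idem t T hid iha.1 ihb.1, iha.2, ihb.2]; rfl
  | impl a b iha ihb =>
    refine ⟨T.resid_mem _ iha.1 _ ihb.1, ?_⟩
    show resid t (eval t v a) (eval t v b) = resid minT (eval minT v a) (eval minT v b)
    rw [← iha.2, ← ihb.2]
    have haI := T.subset iha.1
    have hbI := T.subset ihb.1
    rcases le_or_gt (eval t v a) (eval t v b) with h | h
    · rw [resid_eq_one_of_le t haI hbI h, resid_eq_one_of_le minT haI hbI h]
    · rw [resid_eq_of_lt_idem t T hid iha.1 ihb.1 h,
        resid_eq_of_lt_idem minT (fullAlg minT) idem_min haI hbI h]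

/-- The logic of `(T, t)` extends Gödel logic iff every element of `T` is idempotent;
in that case `t` restricted to `T` is the minimum and its residuum is the Gödel residuum. -/
theorem extends_Godel_iff_idempotent (t : ContTNorm) (T : TruthAlg t) :
    (Taut minT (fullAlg minT) ⊆ Taut t T ↔ ∀ a ∈ T.carrier, t.mul a a = a) ∧
    ((∀ a ∈ T.carrier, t.mul a a = a) →
      (∀ a ∈ T.carrier, ∀ b ∈ T.carrier, t.mul a b = min a b) ∧
      (∀ a ∈ T.carrier, ∀ b ∈ T.carrier,
        (a ≤ b → resid t a b = 1) ∧ (b < a → resid t a b = b))) := by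
  have key_fwd : Taut minT (fullAlg minT) ⊆ Taut t T → ∀ a ∈ T.carrier, t.mul a a = a := by
    intro hsub a ha
    have haI := T.subset ha
    set φ : Formula := Formula.iff (.conj (.var 0) (.var 0)) (.var 0) with hφ
    have hgodel : φ ∈ Taut minT (fullAlg minT) := by
      intro v hv
      have hvI : v 0 ∈ I01 := hv 0
      show minT.mul (resid minT (minT.mul (v 0) (v 0)) (v 0))
        (resid minT (v 0) (minT.mul (v 0) (v 0))) = 1
      have hmm : minT.mul (v 0) (v 0) = v 0 := min_self (v 0)
      rw [hmm, resid_eq_one_of_le minT hvI hvI le_rfl]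
      exact min_self 1
    have hT := hsub hgodel (fun _ => a) (fun _ => ha)
    have hmI : t.mul a a ∈ I01 := t.maps_to a haI a haI
    have hmle : t.mul a a ≤ a := t.mul_le_left haI haI
    have h1 : resid t (t.mul a a) a = 1 := resid_eq_one_of_le t hmI haI hmle
    have heq : t.mul (resid t (t.mul a a) a) (resid t a (t.mul a a)) = 1 := hT
    rw [h1, t.one_mul' _ (resid_mem_I01 t haI hmI)] at heq
    have := le_of_resid_eq_one t haI hmI heq
    exact le_antisymm hmle this
  refine ⟨⟨key_fwd, ?_⟩, ?_⟩
  · intro hid α hα v hv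
    have h := eval_eq_of_idem t T hid hv α
    rw [h.2]
    exact hα v (fun i => T.subset (hv i))
  · intro hid
    refine ⟨fun a ha b hb => mul_eq_min_of_idem t T hid ha hb, fun a ha b hb => ⟨?_, ?_⟩⟩
    · exact fun h => resid_eq_one_of_le t (T.subset ha) (T.subset hb) h
    · exact fun h => resid_eq_of_lt_idem t T hid ha hb h

end
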